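/- Let Q be the quadrilateral with vertices (0,0), (1,0), (0,1), (s,t), s > 1, t > 0, s+t > 1, t ≠ 1. Suppose (x₀,y₀) is in the interior of Q and lies on neither diagonal (x₀ + y₀ ≠ 1 and s·y₀ ≠ t·x₀). Then the quadratic p_{x₀,y₀}(h) has exactly two distinct real roots, both lying in the open interval (1/2, s/2). -/
import Mathlib

set_option maxHeartbeats 1000000

private lemma stmt_11_aux1 (s t x y : ℝ) (hs : 1 < s) (hx0 : 0 < x) (hxs : x < s) (hy0 : 0 < y)
    (hB2 : 0 < s + (t-1)*x - s*y) (hA2 : 0 < (s-1)*y - t*(x-1)) :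
    4*(((t-1)*x - (s-1)*y)^2 + 2*(t-1)*x + 2*(s-1)*y + 1)
      + 4*(((t-1)*x+1)*((s-t)*x-s) - (s-1)*y*(s+(s-t+2)*x)) < 0 := by
  nlinarith [mul_pos hA2 hB2, mul_pos hx0 hy0, mul_pos hA2 hx0, mul_pos hA2 hy0,
    mul_pos hB2 hx0, mul_pos hB2 hy0, sq_nonneg (x+y-1), mul_pos (sub_pos.2 hs) hy0,
    mul_pos (sub_pos.2 hxs) hy0, mul_pos (sub_pos.2 hxs) hA2,
    mul_pos (sub_pos.2 hxs) hB2, sq_nonneg (s*y - t*x)]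

private lemma stmt_11_aux2 (s t x y : ℝ) (hs : 1 < s) (hx0 : 0 < x) (hxs : x < s) (hy0 : 0 < y)
    (hB2 : 0 < s + (t-1)*x - s*y) (hA2 : 0 < (s-1)*y - t*(x-1)) :
    0 < 4*(((t-1)*x - (s-1)*y)^2 + 2*(t-1)*x + 2*(s-1)*y + 1)*s
      + 4*(((t-1)*x+1)*((s-t)*x-s) - (s-1)*y*(s+(s-t+2)*x)) := by
  nlinarith [mul_pos hA2 hB2, mul_pos hx0 hy0, mul_pos hA2 hx0, mul_pos hA2 hy0,
    mul_pos hB2 hx0, mul_pos hB2 hy0, sq_nonneg (x+y-1), mul_pos (sub_pos.2 hs) hy0,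
    mul_pos (sub_pos.2 hxs) hy0, mul_pos (sub_pos.2 hxs) hA2,
    mul_pos (sub_pos.2 hxs) hB2, sq_nonneg (s*y - t*x)]

theorem stmt_11 (s t x₀ y₀ : ℝ) (hs : 1 < s) (ht : 0 < t) (hst : 1 < s + t) (ht1 : t ≠ 1)
    (hx0 : 0 < x₀) (hxs : x₀ < s) (hy0 : 0 < y₀) (hy1 : y₀ < 1 + (t-1)*x₀/s)
    (hint : 1 ≤ x₀ → t*(x₀-1)/(s-1) < y₀)
    (hd1 : x₀ + y₀ ≠ 1) (hd2 : s*y₀ ≠ t*x₀)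
    (f : ℝ) (hf : f = ((t-1)*x₀ - (s-1)*y₀)^2 + 2*(t-1)*x₀ + 2*(s-1)*y₀ + 1)
    (p : ℝ → ℝ)
    (hp : ∀ h, p h = 4*f*h^2
      + 4*(((t-1)*x₀+1)*((s-t)*x₀-s) - (s-1)*y₀*(s+(s-t+2)*x₀))*h
      + ((s-t)*x₀-s)^2 + 4*s*(s-1)*x₀*y₀) :
    ∃ h₁ h₂ : ℝ, h₁ ≠ h₂ ∧
      1/2 < h₁ ∧ h₁ < s/2 ∧ 1/2 < h₂ ∧ h₂ < s/2 ∧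
      p h₁ = 0 ∧ p h₂ = 0 ∧
      (∀ h : ℝ, p h = 0 → h = h₁ ∨ h = h₂) := by
  have hs0 : (0:ℝ) < s := lt_trans one_pos hs
  have hs1 : (0:ℝ) < s - 1 := sub_pos.2 hs
  have hB2 : 0 < s + (t-1)*x₀ - s*y₀ := by
    have h1 : s * y₀ < s * (1 + (t-1)*x₀/s) := mul_lt_mul_of_pos_left hy1 hs0
    have h2 : s * (1 + (t-1)*x₀/s) = s + (t-1)*x₀ := by field_simp
    linarith [h2 ▸ h1]
  have hA2 : 0 < (s-1)*y₀ - t*(x₀-1) := by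
    rcases le_or_gt x₀ 1 with h | h
    · nlinarith [mul_pos hs1 hy0, mul_nonneg ht.le (sub_nonneg.2 h)]
    · have h3 := hint h.le
      rw [div_lt_iff₀ hs1] at h3
      nlinarith
  obtain ⟨a, hadef⟩ : ∃ a : ℝ, a = 4*f := ⟨_, rfl⟩
  obtain ⟨b, hbdef⟩ : ∃ b : ℝ,
      b = 4*(((t-1)*x₀+1)*((s-t)*x₀-s) - (s-1)*y₀*(s+(s-t+2)*x₀)) := ⟨_, rfl⟩
  obtain ⟨c, hcdef⟩ : ∃ c : ℝ, c = ((s-t)*x₀-s)^2 + 4*s*(s-1)*x₀*y₀ := ⟨_, rfl⟩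
  have hp' : ∀ h : ℝ, p h = a*h^2 + b*h + c := by
    intro h; rw [hp, hadef, hbdef, hcdef]; ring
  have ha : 0 < a := by
    rw [hadef, hf]
    nlinarith [sq_nonneg ((t-1)*x₀ - (s-1)*y₀ + 1), mul_pos hs1 hy0]
  have hane : a ≠ 0 := ne_of_gt ha
  have h2a : (0:ℝ) < 2*a := by linarith
  have h2ane : (2*a) ≠ 0 := ne_of_gt h2a
  have hdpos : 0 < b^2 - 4*a*c := by
    have hdisc : b^2 - 4*a*c
        = 64*x₀*y₀*(s-1)^2*(((s-1)*y₀ - t*(x₀-1))*(s + (t-1)*x₀ - s*y₀)) := by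
      rw [hbdef, hadef, hcdef, hf]; ring
    rw [hdisc]
    have h4 := mul_pos hA2 hB2
    positivity
  obtain ⟨D, hDdef⟩ : ∃ D : ℝ, D = Real.sqrt (b^2 - 4*a*c) := ⟨_, rfl⟩
  have hD : D^2 = b^2 - 4*a*c := by rw [hDdef]; exact Real.sq_sqrt hdpos.le
  have hD0 : 0 < D := by rw [hDdef]; exact Real.sqrt_pos.2 hdpos
  have hab : a + b < 0 := by
    rw [hadef, hbdef, hf]
    exact stmt_11_aux1 s t x₀ y₀ hs hx0 hxs hy0 hB2 hA2
  have hasb : 0 < a*s + b := by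
    rw [hadef, hbdef, hf]
    exact stmt_11_aux2 s t x₀ y₀ hs hx0 hxs hy0 hB2 hA2
  have hphalfpos : 0 < a + 2*b + 4*c := by
    have hphalf : a + 2*b + 4*c = 4*(s-1)^2*(x₀+y₀-1)^2 := by
      rw [hadef, hbdef, hcdef, hf]; ring
    rw [hphalf]
    have h1 : x₀ + y₀ - 1 ≠ 0 := fun h => hd1 (by linarith)
    positivity
  have hps2pos : 0 < a*s^2 + 2*b*s + 4*c := by
    have hps2 : a*s^2 + 2*b*s + 4*c = 4*(s-1)^2*(t*x₀ - s*y₀)^2 := by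
      rw [hadef, hbdef, hcdef, hf]; ring
    rw [hps2]
    have h1 : t*x₀ - s*y₀ ≠ 0 := fun h => hd2 (by linarith)
    positivity
  have hDlt1 : D < -(a+b) := by
    rw [hDdef, Real.sqrt_lt' (by linarith)]
    nlinarith [mul_pos ha hphalfpos]
  have hDlt2 : D < a*s + b := by
    rw [hDdef, Real.sqrt_lt' hasb]
    nlinarith [mul_pos ha hps2pos]
  refine ⟨(-b-D)/(2*a), (-b+D)/(2*a), ?_, ?_, ?_, ?_, ?_, ?_, ?_, ?_⟩
  · intro h
    rw [div_eq_div_iff h2ane h2ane] at h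
    nlinarith [mul_pos hD0 ha]
  · rw [lt_div_iff₀ h2a]; linarith
  · rw [div_lt_iff₀ h2a]; nlinarith [mul_pos hD0 ha]
  · rw [lt_div_iff₀ h2a]; nlinarith [mul_pos hD0 ha]
  · rw [div_lt_iff₀ h2a]; linarith
  · rw [hp']
    field_simp
    nlinarith [hD]
  · rw [hp']
    field_simp
    nlinarith [hD]
  · intro h hph
    rw [hp' h] at hph
    have key : (2*a*h + b - D) * (2*a*h + b + D) = 0 := by
      have h5 : (2*a*h+b)^2 - D^2 = 4*a*(a*h^2 + b*h + c) := by rw [hD]; ring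
      nlinarith [h5, hph]
    rcases mul_eq_zero.1 key with h1 | h1
    · right; field_simp; linarith
    · left; field_simp; linarith
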